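/- If C ⊆ F_q^n is a (ρ, 2ρn+1, L)-list-recoverable code, then C is a (ρ, L)-list-decodable insdel code: for every string y over F_q, the number of codewords c ∈ C with d_ed(c, y) ≤ ρn is at most L. -/

import Mathlib

/-- Insertion/deletion edit distance between lists, via a common subsequence. -/
noncomputable def editDist {α : Type*} (x y : List α) : ℕ :=
  sInf {d | ∃ z : List α, z.Sublist x ∧ z.Sublist y ∧
    d = (x.length - z.length) + (y.length - z.length)}

/-- `C ⊆ F^n` is `(ρ, ℓ, L)`-list-recoverable: for every tuple of lists
`S_1,…,S_n ⊆ F` each of size at most `ℓ`, at most `L` codewords `c` satisfy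
`|{i : c i ∉ S i}| ≤ ρn`. -/
def ListRecoverable {F : Type*} [DecidableEq F] {n : ℕ} (ρ : ℝ) (ℓ L : ℕ)
    (C : Finset (Fin n → F)) : Prop :=
  ∀ S : Fin n → Finset F, (∀ i, (S i).card ≤ ℓ) →
    (C.filter (fun c =>
      ((Finset.univ.filter (fun i => c i ∉ S i)).card : ℝ) ≤ ρ * n)).card ≤ L

/-- Any strictly monotone `ℕ`-valued function on `Fin m` satisfies `i ≤ v i`. -/
lemma strictMono_fin_le {m : ℕ} (v : Fin m → ℕ) (hv : StrictMono v) (i : Fin m) :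
    i.val ≤ v i := by
  obtain ⟨i, hi⟩ := i
  induction i with
  | zero => exact Nat.zero_le _
  | succ j ih =>
    have hj : j < m := Nat.lt_of_succ_lt hi
    have h1 := ih hj
    have h2 : v ⟨j, hj⟩ < v ⟨j + 1, hi⟩ := hv (by simp [Fin.lt_def])
    simp only [Fin.val_mk] at h1 ⊢
    omega

/-- Any strictly monotone function on `Fin m` with values `< k` satisfies
`v i ≤ i + (k - m)`. -/
lemma strictMono_fin_ub {m k : ℕ} (v : Fin m → ℕ) (hv : StrictMono v)
    (hk : ∀ i, v i < k) (i : Fin m) : v i ≤ i.val + (k - m) := by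
  have hw : StrictMono (fun j : Fin m => k - 1 - v j.rev) := by
    intro a b hab
    have h1 : v b.rev < v a.rev := hv (Fin.rev_lt_rev.mpr hab)
    have h2 := hk a.rev
    simp only
    omega
  have h1 := strictMono_fin_le _ hw i.rev
  simp only [Fin.rev_rev, Fin.val_rev] at h1
  have h2 := hk i
  have h3 : m - 1 < m := by omega
  have h4 := strictMono_fin_le v hv ⟨m - 1, h3⟩
  have h5 := hk ⟨m - 1, h3⟩
  have h6 := i.isLt
  simp only [Fin.val_mk] at h4 h5
  omega

/-- If `C ⊆ F^n` is `(ρ, 2ρn+1, L)`-list-recoverable (with `t = ρn`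
an integer), then `C` is a `(ρ, L)`-list-decodable insdel code: for every string `y`
over `F`, at most `L` codewords `c ∈ C` satisfy `d_ed(c, y) ≤ ρn`. -/
theorem listRecoverable_implies_insdel_listDecodable
    {F : Type*} [DecidableEq F] {n t L : ℕ} (ρ : ℝ) (ht : (t : ℝ) = ρ * n)
    (C : Finset (Fin n → F)) (h : ListRecoverable ρ (2 * t + 1) L C)
    (y : List F) :
    (C.filter (fun c => editDist (List.ofFn c) y ≤ t)).card ≤ L := by
  classical
  set S : Fin n → Finset F := fun i => ((y.drop (i.val - t)).take (2 * t + 1)).toFinset with hSdef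
  have hcard : ∀ i, (S i).card ≤ 2 * t + 1 := by
    intro i
    refine le_trans (List.toFinset_card_le _) ?_
    simp [List.length_take]
  refine le_trans (Finset.card_le_card ?_) (h S hcard)
  intro c hc
  simp only [Finset.mem_filter] at hc ⊢
  obtain ⟨hcC, hed⟩ := hc
  refine ⟨hcC, ?_⟩
  -- extract a common subsequence witnessing the edit distance
  have hne : {d | ∃ z : List F, z.Sublist (List.ofFn c) ∧ z.Sublist y ∧
      d = ((List.ofFn c).length - z.length) + (y.length - z.length)}.Nonempty :=
    ⟨_, [], List.nil_sublist _, List.nil_sublist _, rfl⟩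
  have hmem : editDist (List.ofFn c) y ∈ {d | ∃ z : List F, z.Sublist (List.ofFn c) ∧
      z.Sublist y ∧ d = ((List.ofFn c).length - z.length) + (y.length - z.length)} :=
    Nat.sInf_mem hne
  obtain ⟨z, hzx, hzy, hd⟩ := hmem
  obtain ⟨f, hf⟩ := List.sublist_iff_exists_fin_orderEmbedding_get_eq.mp hzx
  obtain ⟨g, hg⟩ := List.sublist_iff_exists_fin_orderEmbedding_get_eq.mp hzy
  have hlen : (List.ofFn c).length = n := List.length_ofFn (f := c)
  have hdt : (n - z.length) + (y.length - z.length) ≤ t := by rw [hlen] at hd; omega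
  set F' : Fin z.length → Fin n := fun k => Fin.cast hlen (f k) with hF'
  have hF'inj : Function.Injective F' := by
    intro a b hab
    have h1 := congrArg Fin.val hab
    have h2 : (f a).val = (f b).val := h1
    exact f.injective (Fin.ext h2)
  -- key claim : on the image of F', the codeword agrees with S
  have key : ∀ k : Fin z.length, c (F' k) ∈ S (F' k) := by
    intro k
    have hfmono : StrictMono (fun j : Fin z.length => ((f j : ℕ))) :=
      fun a b hab => f.strictMono hab
    have hgmono : StrictMono (fun j : Fin z.length => ((g j : ℕ))) :=
      fun a b hab => g.strictMono hab
    have hf1 : (k : ℕ) ≤ (f k : ℕ) := strictMono_fin_le _ hfmono k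
    have hf2 : (f k : ℕ) ≤ (k : ℕ) + ((List.ofFn c).length - z.length) :=
      strictMono_fin_ub _ hfmono (fun j => (f j).isLt) k
    have hg1 : (k : ℕ) ≤ (g k : ℕ) := strictMono_fin_le _ hgmono k
    have hg2 : (g k : ℕ) ≤ (k : ℕ) + (y.length - z.length) :=
      strictMono_fin_ub _ hgmono (fun j => (g j).isLt) k
    have hb : (g k : ℕ) < y.length := (g k).isLt
    -- value equality
    have hval : c (F' k) = y.get (g k) := by
      have h2 := (hf k).symm.trans (hg k)
      have h3 : c (F' k) = (List.ofFn c).get (f k) := by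
        simp only [hF', List.get_ofFn]
      exact h3.trans h2
    set i := ((f k : ℕ)) with hi
    set b := ((g k : ℕ)) with hb'
    have hF'val : ((F' k : ℕ)) = i := rfl
    rw [hval, hSdef]
    simp only [hF'val, List.mem_toFinset]
    -- show y.get (g k) is in the window
    set s := i - t with hs
    have hsb : s ≤ b := by omega
    have hbs : b - s < 2 * t + 1 := by omega
    have h2 : b - s < ((y.drop s).take (2 * t + 1)).length := by
      simp only [List.length_take, List.length_drop]
      omega
    have h3 : ((y.drop s).take (2 * t + 1))[b - s]'h2 = y[b]'hb := by
      rw [List.getElem_take, List.getElem_drop]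
      simp only [show s + (b - s) = b from by omega]
    have h4 : y[b]'hb ∈ (y.drop s).take (2 * t + 1) := h3 ▸ List.getElem_mem h2
    simpa [List.get_eq_getElem] using h4
  have hsub : Finset.univ.filter (fun i => c i ∉ S i) ⊆ (Finset.univ.image F')ᶜ := by
    intro i hi
    simp only [Finset.mem_filter, Finset.mem_compl, Finset.mem_image] at hi ⊢
    rintro ⟨k, -, rfl⟩
    exact hi.2 (key k)
  have himg : (Finset.univ.image F').card = z.length := by
    rw [Finset.card_image_of_injective _ hF'inj, Finset.card_univ, Fintype.card_fin]
  have hcount : (Finset.univ.filter (fun i => c i ∉ S i)).card ≤ n - z.length := by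
    calc (Finset.univ.filter (fun i => c i ∉ S i)).card
        ≤ ((Finset.univ.image F')ᶜ).card := Finset.card_le_card hsub
      _ = n - z.length := by rw [Finset.card_compl, himg, Fintype.card_fin]
  rw [← ht]
  have hfin : (Finset.univ.filter (fun i => c i ∉ S i)).card ≤ t := by omega
  exact_mod_cast hfin
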